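/- Let n ≥ 3, let v₁, v₂, v₃, v₄ ∈ ℝ^{n+1} be pairwise orthogonal vectors with ‖vᵢ‖² = 1/2 for i = 1,2,3,4, let a, b ∈ ℝ satisfy a² + b² = 1, and define γ(s) = cos(√2 a s) v₁ + sin(√2 a s) v₂ + cos(√2 b s) v₃ + sin(√2 b s) v₄. For a smooth map X : ℝ → ℝ^{n+1}, set (D X)(s) = X'(s) − ⟨X'(s), γ(s)⟩ γ(s). Then γ satisfies D(D(D γ'))(s) + (D γ')(s) = 0 for all s ∈ ℝ; that is, γ is a biharmonic curve in the unit sphere Sⁿ. -/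

import Mathlib

open scoped RealInnerProductSpace

/-- The covariant derivative along a unit-sphere curve `γ` of a vector field `X` along `γ`:
the orthogonal projection `(D X)(s) = X'(s) − ⟨X'(s), γ(s)⟩ γ(s)` of the Euclidean
derivative onto the tangent space of the sphere at `γ(s)`. -/
noncomputable def sphereCovD {m : ℕ} (γ X : ℝ → EuclideanSpace ℝ (Fin m)) :
    ℝ → EuclideanSpace ℝ (Fin m) := fun s =>
  deriv X s - ⟪deriv X s, γ s⟫ • γ s

section aux
variable {E : Type*} [NormedAddCommGroup E] [InnerProductSpace ℝ E]

lemma comb_hasDerivAt (p q r t : ℝ → ℝ) (p' q' r' t' : ℝ) (v0 v1 v2 v3 : E) {s : ℝ}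
    (hp : HasDerivAt p p' s) (hq : HasDerivAt q q' s) (hr : HasDerivAt r r' s)
    (ht : HasDerivAt t t' s) :
    HasDerivAt (fun u => p u • v0 + q u • v1 + r u • v2 + t u • v3)
      (p' • v0 + q' • v1 + r' • v2 + t' • v3) s :=
  (((hp.smul_const v0).add (hq.smul_const v1)).add (hr.smul_const v2)).add (ht.smul_const v3)

lemma comb_inner (v : Fin 4 → E)
    (horth : ∀ i j : Fin 4, i ≠ j → ⟪v i, v j⟫ = 0)
    (hnorm : ∀ i : Fin 4, ⟪v i, v i⟫ = 1/2)
    (p q r t p' q' r' t' : ℝ) :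
    ⟪p • v 0 + q • v 1 + r • v 2 + t • v 3,
      p' • v 0 + q' • v 1 + r' • v 2 + t' • v 3⟫ =
      (p * p' + q * q' + r * r' + t * t') / 2 := by
  simp only [inner_add_left, inner_add_right, real_inner_smul_left, real_inner_smul_right,
    horth 0 1 (by decide), horth 0 2 (by decide), horth 0 3 (by decide),
    horth 1 0 (by decide), horth 1 2 (by decide), horth 1 3 (by decide),
    horth 2 0 (by decide), horth 2 1 (by decide), horth 2 3 (by decide),
    horth 3 0 (by decide), horth 3 1 (by decide), horth 3 2 (by decide),
    hnorm 0, hnorm 1, hnorm 2, hnorm 3]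
  ring

lemma hcs (c s : ℝ) : HasDerivAt (fun u => Real.cos (c*u)) (-(c * Real.sin (c*s))) s := by
  simpa [mul_comm] using (HasDerivAt.cos (by simpa using (hasDerivAt_id s).const_mul c))

lemma hsn (c s : ℝ) : HasDerivAt (fun u => Real.sin (c*u)) (c * Real.cos (c*s)) s := by
  simpa [mul_comm] using (HasDerivAt.sin (by simpa using (hasDerivAt_id s).const_mul c))
end aux

/-- For pairwise orthogonal vectors `v₁, v₂, v₃, v₄ ∈ ℝ^{n+1}` with
`‖vᵢ‖² = 1/2` and `a² + b² = 1`, the curve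
`γ(s) = cos(√2 a s) v₁ + sin(√2 a s) v₂ + cos(√2 b s) v₃ + sin(√2 b s) v₄`
satisfies `D(D(D γ'))(s) + (D γ')(s) = 0` for all `s`; that is, `γ` is a biharmonic curve
in the unit sphere `Sⁿ`. -/
theorem clifford_geodesic_biharmonic (n : ℕ) (hn : 3 ≤ n)
    (v : Fin 4 → EuclideanSpace ℝ (Fin (n + 1)))
    (horth : ∀ i j : Fin 4, i ≠ j → ⟪v i, v j⟫ = 0)
    (hnorm : ∀ i : Fin 4, ‖v i‖ ^ 2 = 1 / 2)
    (a b : ℝ) (hab : a ^ 2 + b ^ 2 = 1) :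
    let γ : ℝ → EuclideanSpace ℝ (Fin (n + 1)) := fun s =>
      Real.cos (Real.sqrt 2 * a * s) • v 0 + Real.sin (Real.sqrt 2 * a * s) • v 1 +
        Real.cos (Real.sqrt 2 * b * s) • v 2 + Real.sin (Real.sqrt 2 * b * s) • v 3
    ∀ s : ℝ,
      sphereCovD γ (sphereCovD γ (sphereCovD γ (deriv γ))) s
        + sphereCovD γ (deriv γ) s = 0 := by
  intro γ
  set α := Real.sqrt 2 * a with hα
  set β := Real.sqrt 2 * b with hβ
  have hαβ : α ^ 2 + β ^ 2 = 2 := by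
    have h2 : (Real.sqrt 2) ^ 2 = 2 := Real.sq_sqrt (by norm_num)
    rw [hα, hβ, mul_pow, mul_pow, h2]; nlinarith [hab]
  have hnorm' : ∀ i : Fin 4, ⟪v i, v i⟫ = 1/2 := fun i => by
    rw [real_inner_self_eq_norm_sq]; exact hnorm i
  have hin := comb_inner v horth hnorm'
  have hγdef : γ = fun s => Real.cos (α*s) • v 0 + Real.sin (α*s) • v 1 +
      Real.cos (β*s) • v 2 + Real.sin (β*s) • v 3 := rfl
  -- first derivative of γ
  have hγ1 : ∀ s, HasDerivAt γ
      ((-(α * Real.sin (α*s))) • v 0 + (α * Real.cos (α*s)) • v 1 +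
       (-(β * Real.sin (β*s))) • v 2 + (β * Real.cos (β*s)) • v 3) s := by
    intro s
    rw [hγdef]
    exact comb_hasDerivAt _ _ _ _ _ _ _ _ (v 0) (v 1) (v 2) (v 3)
      (hcs α s) (hsn α s) (hcs β s) (hsn β s)
  have hderivγ : deriv γ = fun s =>
      (-(α * Real.sin (α*s))) • v 0 + (α * Real.cos (α*s)) • v 1 +
      (-(β * Real.sin (β*s))) • v 2 + (β * Real.cos (β*s)) • v 3 :=
    funext fun s => (hγ1 s).deriv
  -- second derivative of γ
  have hγ2 : ∀ s : ℝ, deriv (deriv γ) s =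
      (-(α * (α * Real.cos (α*s)))) • v 0 + (α * -(α * Real.sin (α*s))) • v 1 +
      (-(β * (β * Real.cos (β*s)))) • v 2 + (β * -(β * Real.sin (β*s))) • v 3 := by
    intro s
    rw [hderivγ]
    exact (comb_hasDerivAt _ _ _ _ _ _ _ _ (v 0) (v 1) (v 2) (v 3)
      ((hsn α s).const_mul α).neg ((hcs α s).const_mul α)
      ((hsn β s).const_mul β).neg ((hcs β s).const_mul β)).deriv
  -- first covariant derivative : the tension field T
  have hD1 : sphereCovD γ (deriv γ) = fun s =>
      ((1-α^2) * Real.cos (α*s)) • v 0 + ((1-α^2) * Real.sin (α*s)) • v 1 +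
      ((1-β^2) * Real.cos (β*s)) • v 2 + ((1-β^2) * Real.sin (β*s)) • v 3 := by
    funext s
    show deriv (deriv γ) s - ⟪deriv (deriv γ) s, γ s⟫ • γ s = _
    rw [hγ2 s]
    simp only [hγdef, hin]
    have pA := Real.sin_sq_add_cos_sq (α*s)
    have pB := Real.sin_sq_add_cos_sq (β*s)
    match_scalars
    · linear_combination (Real.cos (α*s)*α^2/2) * pA + (Real.cos (α*s)*β^2/2) * pB
        + (Real.cos (α*s)/2) * hαβ
    · linear_combination (Real.sin (α*s)*α^2/2) * pA + (Real.sin (α*s)*β^2/2) * pB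
        + (Real.sin (α*s)/2) * hαβ
    · linear_combination (Real.cos (β*s)*α^2/2) * pA + (Real.cos (β*s)*β^2/2) * pB
        + (Real.cos (β*s)/2) * hαβ
    · linear_combination (Real.sin (β*s)*α^2/2) * pA + (Real.sin (β*s)*β^2/2) * pB
        + (Real.sin (β*s)/2) * hαβ
  -- derivative of T
  have hT1 : ∀ s : ℝ, deriv (sphereCovD γ (deriv γ)) s =
      ((1-α^2) * -(α * Real.sin (α*s))) • v 0 + ((1-α^2) * (α * Real.cos (α*s))) • v 1 +
      ((1-β^2) * -(β * Real.sin (β*s))) • v 2 + ((1-β^2) * (β * Real.cos (β*s))) • v 3 := by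
    intro s
    rw [hD1]
    exact (comb_hasDerivAt _ _ _ _ _ _ _ _ (v 0) (v 1) (v 2) (v 3)
      ((hcs α s).const_mul (1-α^2)) ((hsn α s).const_mul (1-α^2))
      ((hcs β s).const_mul (1-β^2)) ((hsn β s).const_mul (1-β^2))).deriv
  -- second covariant derivative
  have hD2 : sphereCovD γ (sphereCovD γ (deriv γ)) = fun s =>
      ((1-α^2) * -(α * Real.sin (α*s))) • v 0 + ((1-α^2) * (α * Real.cos (α*s))) • v 1 +
      ((1-β^2) * -(β * Real.sin (β*s))) • v 2 + ((1-β^2) * (β * Real.cos (β*s))) • v 3 := by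
    funext s
    show deriv (sphereCovD γ (deriv γ)) s - ⟪deriv (sphereCovD γ (deriv γ)) s, γ s⟫ • γ s = _
    rw [hT1 s]
    simp only [hγdef, hin]
    match_scalars <;> ring
  -- derivative of D(T)
  have hT2 : ∀ s : ℝ, deriv (fun u =>
      ((1-α^2) * -(α * Real.sin (α*u))) • v 0 + ((1-α^2) * (α * Real.cos (α*u))) • v 1 +
      ((1-β^2) * -(β * Real.sin (β*u))) • v 2 + ((1-β^2) * (β * Real.cos (β*u))) • v 3) s =
      ((1-α^2) * -(α * (α * Real.cos (α*s)))) • v 0 +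
      ((1-α^2) * (α * -(α * Real.sin (α*s)))) • v 1 +
      ((1-β^2) * -(β * (β * Real.cos (β*s)))) • v 2 +
      ((1-β^2) * (β * -(β * Real.sin (β*s)))) • v 3 := by
    intro s
    exact (comb_hasDerivAt _ _ _ _ _ _ _ _ (v 0) (v 1) (v 2) (v 3)
      (((hsn α s).const_mul α).neg.const_mul (1-α^2))
      (((hcs α s).const_mul α).const_mul (1-α^2))
      (((hsn β s).const_mul β).neg.const_mul (1-β^2))
      (((hcs β s).const_mul β).const_mul (1-β^2))).deriv
  -- final computation
  intro s
  rw [hD2, hD1]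
  simp only [sphereCovD, hT2 s, hγdef, hin]
  have pA := Real.sin_sq_add_cos_sq (α*s)
  have pB := Real.sin_sq_add_cos_sq (β*s)
  match_scalars
  · linear_combination (Real.cos (α*s)*(1-α^2)*α^2/2) * pA
      + (Real.cos (α*s)*(1-β^2)*β^2/2) * pB
      + (-(Real.cos (α*s)/2)*(β^2+1-α^2)) * hαβ
  · linear_combination (Real.sin (α*s)*(1-α^2)*α^2/2) * pA
      + (Real.sin (α*s)*(1-β^2)*β^2/2) * pB
      + (-(Real.sin (α*s)/2)*(β^2+1-α^2)) * hαβ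
  · linear_combination (Real.cos (β*s)*(1-α^2)*α^2/2) * pA
      + (Real.cos (β*s)*(1-β^2)*β^2/2) * pB
      + (-(Real.cos (β*s)/2)*(α^2+1-β^2)) * hαβ
  · linear_combination (Real.sin (β*s)*(1-α^2)*α^2/2) * pA
      + (Real.sin (β*s)*(1-β^2)*β^2/2) * pB
      + (-(Real.sin (β*s)/2)*(α^2+1-β^2)) * hαβ
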